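/- There exists an absolute constant C > 0 with the following property. Let H be a real Hilbert space with closed unit ball B_H, let Θ be a set, and for each θ ∈ Θ let S_θ ⊆ H be a finite-dimensional subspace with orthogonal projection P_θ : H → S_θ; set K = sup_{θ∈Θ} dim(S_θ) < ∞. Let ξ : Θ × B_H → ∪_θ S_θ ∩ B_H be the parametrization ξ(θ, x) = P_θ x, with induced semi-metric d_ξ((θ, x), (θ', x')) = ‖P_θ x − P_{θ'} x'‖_H. Then γ₂(Θ × B_H, d_ξ) ≤ C(√K + γ₂(Θ, d_Fin)), where d_Fin(θ, θ') = ‖P_θ − P_{θ'}‖ is the Finsler semi-metric (operator norm of the difference of projections). -/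

import Mathlib

open MeasureTheory ENNReal

noncomputable section

/-- The subgaussian (`ψ₂`) norm of a real random variable,
`‖X‖_{ψ₂} = inf {C > 0 : E exp(|X|²/C²) ≤ 2}`, valued in `ℝ≥0∞` (with `inf ∅ = ∞`). -/
def psi2Norm {Ω : Type*} [MeasurableSpace Ω] (μ : Measure Ω) (X : Ω → ℝ) : ℝ≥0∞ :=
  sInf {c : ℝ≥0∞ | 0 < c ∧ c ≠ ⊤ ∧ ∫ ω, Real.exp (|X ω| ^ 2 / c.toReal ^ 2) ∂μ ≤ 2}

/-- Talagrand's `γ₂`-functional of a semi-metric `d` on `T`: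
`γ₂(T,d) = inf sup_t Σ_n 2^(n/2) d(t, π n t)`, the infimum being over all sequences of maps
`π n : T → T` whose ranges `T n := range (π n)` form an admissible sequence, i.e.
`|T 0| = 1` and `|T n| ≤ 2^(2^n)`. -/
def gamma2 {T : Type*} (d : T → T → ℝ≥0∞) : ℝ≥0∞ :=
  ⨅ (π : ℕ → T → T) (_ : (Set.range (π 0)).Subsingleton ∧
      ∀ n, (Set.range (π n)).Finite ∧ Nat.card (Set.range (π n)) ≤ 2 ^ 2 ^ n),
    ⨆ t, ∑' n : ℕ, (2 : ℝ≥0∞) ^ ((n : ℝ) / 2) * d t (π n t)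

/-- `Φ : Ω × H → ℝ^m` is a linear, isotropic, subgaussian map on `S ⊆ H` with parameter `α`,
where `Ω = Ω 1 × ⋯ × Ω m` is a product of probability spaces: (a) each `Φ ω` is linear;
(b) each coordinate `[Φ(x)]ᵢ` is an `L²` random variable depending only on the `i`-th
coordinate of `ω`; (c) `E ‖Φ(x)‖₂² = ‖x‖²`; (d) `max_i ‖[Φ(x) - Φ(y)]ᵢ‖_{ψ₂} ≤ √(α/m) ‖x-y‖`
for all `x, y ∈ S ∪ {0}`. -/
def IsSubgaussianMap {H : Type*} [NormedAddCommGroup H] [InnerProductSpace ℝ H]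
    {m : ℕ} {Ω : Fin m → Type*} [∀ i, MeasurableSpace (Ω i)]
    (μ : ∀ i, Measure (Ω i)) [∀ i, IsProbabilityMeasure (μ i)]
    (Φ : (∀ i, Ω i) → H → EuclideanSpace ℝ (Fin m)) (S : Set H) (α : ℝ) : Prop :=
  (∀ ω, IsLinearMap ℝ (Φ ω)) ∧
  (∀ x ∈ S, ∀ i : Fin m, ∃ f : Ω i → ℝ, MemLp f 2 (μ i) ∧ ∀ ω, Φ ω x i = f (ω i)) ∧
  (∀ x ∈ S, ∫ ω, ‖Φ ω x‖ ^ 2 ∂(Measure.pi μ) = ‖x‖ ^ 2) ∧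
  (∀ x ∈ S ∪ {0}, ∀ y ∈ S ∪ {0}, ∀ i : Fin m,
    psi2Norm (Measure.pi μ) (fun ω => Φ ω x i - Φ ω y i)
      ≤ ENNReal.ofReal (Real.sqrt (α / m) * ‖x - y‖))

/-- The orthogonal projection onto a finite-dimensional subspace `S` of a real Hilbert
space, viewed as a continuous linear map `H →L[ℝ] H`. -/
def projCLM {H : Type*} [NormedAddCommGroup H] [InnerProductSpace ℝ H] [CompleteSpace H]
    (S : Submodule ℝ H) [FiniteDimensional ℝ S] : H →L[ℝ] H :=
  S.subtypeL.comp (Submodule.orthogonalProjection S)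

/-! ### Auxiliary lemmas -/

open Metric Set in
/-- Volume packing bound: an `ε`-separated subset of the unit ball of a `d`-dimensional
normed space has at most `(3/ε)^d` points. -/
lemma packing_card_le {E : Type*} [NormedAddCommGroup E] [NormedSpace ℝ E]
    [FiniteDimensional ℝ E] {ε : ℝ} (hε : 0 < ε) (hε1 : ε ≤ 1)
    (s : Finset E) (hs : ∀ a ∈ s, ‖a‖ ≤ 1)
    (hsep : ∀ a ∈ s, ∀ b ∈ s, a ≠ b → ε < dist a b) :
    (s.card : ℝ) ≤ (3 / ε) ^ (Module.finrank ℝ E) := by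
  borelize E
  set d := Module.finrank ℝ E with hd
  set μ : Measure E := (Module.finBasis ℝ E).addHaar with hμ
  have hdisj : (↑s : Set E).PairwiseDisjoint (fun a => ball a (ε / 2)) := by
    intro a ha b hb hab
    exact ball_disjoint_ball (by have := hsep a ha b hb hab; linarith)
  have hsub : (⋃ a ∈ s, ball a (ε/2)) ⊆ ball (0 : E) (3/2) := by
    intro y hy
    simp only [mem_iUnion, exists_prop] at hy
    obtain ⟨a, ha, hya⟩ := hy
    have h1 : dist y a < ε / 2 := mem_ball.mp hya
    have h2 : ‖a‖ ≤ 1 := hs a ha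
    have : dist y 0 < 3/2 := by
      calc dist y 0 ≤ dist y a + dist a 0 := dist_triangle _ _ _
        _ < ε/2 + 1 := by rw [dist_zero_right]; linarith
        _ ≤ 3/2 := by linarith
    exact mem_ball.mpr this
  have hmeas : μ (⋃ a ∈ s, ball a (ε/2)) = ∑ a ∈ s, μ (ball a (ε/2)) :=
    measure_biUnion_finset hdisj (fun a _ => measurableSet_ball)
  have hball : ∀ a : E, μ (ball a (ε/2)) = ENNReal.ofReal ((ε/2) ^ d) * μ (ball 0 1) :=
    fun a => Measure.addHaar_ball_of_pos μ a (by linarith)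
  have h32 : μ (ball (0:E) (3/2)) = ENNReal.ofReal ((3/2 : ℝ) ^ d) * μ (ball 0 1) :=
    Measure.addHaar_ball_of_pos μ _ (by norm_num)
  have hB0 : μ (ball (0:E) 1) ≠ 0 := (measure_ball_pos μ 0 one_pos).ne'
  have hBt : μ (ball (0:E) 1) ≠ ⊤ := measure_ball_lt_top.ne
  have key : (s.card : ℝ≥0∞) * ENNReal.ofReal ((ε/2) ^ d) ≤ ENNReal.ofReal ((3/2 : ℝ) ^ d) := by
    rw [← ENNReal.mul_le_mul_iff_left hB0 hBt, mul_assoc]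
    calc (s.card : ℝ≥0∞) * (ENNReal.ofReal ((ε/2) ^ d) * μ (ball 0 1))
        = ∑ a ∈ s, μ (ball a (ε/2)) := by
          simp only [hball, Finset.sum_const, nsmul_eq_mul]
      _ = μ (⋃ a ∈ s, ball a (ε/2)) := hmeas.symm
      _ ≤ μ (ball (0:E) (3/2)) := measure_mono hsub
      _ = ENNReal.ofReal ((3/2 : ℝ) ^ d) * μ (ball 0 1) := h32
  have hpow : (0:ℝ) < (ε/2) ^ d := by positivity
  have key2 : (s.card : ℝ) * (ε/2) ^ d ≤ (3/2 : ℝ) ^ d := by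
    have := key
    rw [show ((s.card : ℝ≥0∞)) = ENNReal.ofReal (s.card : ℝ) by
          simp [ENNReal.ofReal_natCast],
        ← ENNReal.ofReal_mul (by positivity)] at this
    exact (ENNReal.ofReal_le_ofReal_iff (by positivity)).mp this
  have : (s.card : ℝ) ≤ (3/2 : ℝ) ^ d / (ε/2) ^ d := by
    rw [le_div_iff₀ hpow]; exact key2
  calc (s.card : ℝ) ≤ (3/2 : ℝ) ^ d / (ε/2) ^ d := this
    _ = (3 / ε) ^ d := by
        rw [← div_pow]
        congr 1
        field_simp

open Metric Set in
/-- A maximal `ε`-separated subset of the unit ball: it is an `ε`-net and obeys the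
packing cardinality bound. -/
lemma exists_maximal_net {E : Type*} [NormedAddCommGroup E] [NormedSpace ℝ E]
    [FiniteDimensional ℝ E] {ε : ℝ} (hε : 0 < ε) (hε1 : ε ≤ 1) :
    ∃ s : Finset E, s.Nonempty ∧ (∀ a ∈ s, ‖a‖ ≤ 1) ∧
      ((s.card : ℝ) ≤ (3 / ε) ^ (Module.finrank ℝ E)) ∧
      ∀ x : E, ‖x‖ ≤ 1 → ∃ a ∈ s, dist x a ≤ ε := by
  classical
  set P : Finset E → Prop := fun s =>
    (∀ a ∈ s, ‖a‖ ≤ 1) ∧ ∀ a ∈ s, ∀ b ∈ s, a ≠ b → ε < dist a b with hP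
  have hcardP : ∀ {s : Finset E}, P s → (s.card : ℝ) ≤ (3 / ε) ^ (Module.finrank ℝ E) :=
    fun {s} hPs => packing_card_le hε hε1 s hPs.1 hPs.2
  set A : Set ℕ := {n | ∃ s : Finset E, P s ∧ s.card = n} with hA
  have hbdd : BddAbove A := by
    refine ⟨⌈(3 / ε) ^ (Module.finrank ℝ E)⌉₊, fun n hn => ?_⟩
    obtain ⟨s, hPs, rfl⟩ := hn
    exact_mod_cast (hcardP hPs).trans (Nat.le_ceil _)
  have h1A : 1 ∈ A := by
    refine ⟨{0}, ⟨?_, ?_⟩, Finset.card_singleton 0⟩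
    · intro a ha; simp only [Finset.mem_singleton] at ha; simp [ha]
    · intro a ha b hb hab
      simp only [Finset.mem_singleton] at ha hb
      exact absurd (ha.trans hb.symm) hab
  have hne : A.Nonempty := ⟨1, h1A⟩
  obtain ⟨s, hPs, hcard⟩ := Nat.sSup_mem hne hbdd
  refine ⟨s, ?_, hPs.1, hcardP hPs, ?_⟩
  · rw [← Finset.card_pos, hcard]
    exact le_csSup hbdd h1A
  · intro x hx
    by_contra hcov
    push_neg at hcov
    have hxs : x ∉ s := fun hxs => by
      have := hcov x hxs; simp at this; linarith
    have hPins : P (insert x s) := by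
      constructor
      · intro a ha
        rcases Finset.mem_insert.mp ha with rfl | ha
        · exact hx
        · exact hPs.1 a ha
      · intro a ha b hb hab
        rcases Finset.mem_insert.mp ha with ha' | ha'
        · rcases Finset.mem_insert.mp hb with hb' | hb'
          · exact absurd (ha'.trans hb'.symm) hab
          · rw [ha']; exact hcov b hb'
        · rcases Finset.mem_insert.mp hb with hb' | hb'
          · rw [hb', dist_comm]; exact hcov a ha'
          · exact hPs.2 a ha' b hb' hab
    have : s.card + 1 ∈ A := ⟨insert x s, hPins, by rw [Finset.card_insert_of_notMem hxs]⟩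
    have := le_csSup hbdd this
    rw [← hcard] at this
    omega

open Metric Set in
/-- An `ε`-net of the unit ball of a finite-dimensional subspace `E` of `H`, given as a
retraction map `r : H → H` with finite range contained in `E ∩ B_H`. -/
lemma exists_net {H : Type*} [NormedAddCommGroup H] [NormedSpace ℝ H]
    (E : Submodule ℝ H) [FiniteDimensional ℝ E] {ε : ℝ} (hε : 0 < ε) :
    ∃ r : H → H, (∀ y, r y ∈ E ∧ ‖r y‖ ≤ 1) ∧ (Set.range r).Finite ∧
      ((Nat.card (Set.range r) : ℝ) ≤ max 1 ((3 / ε) ^ Module.finrank ℝ ↥E)) ∧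
      ∀ y ∈ E, ‖y‖ ≤ 1 → ‖y - r y‖ ≤ ε := by
  classical
  rcases le_or_gt 1 ε with h1 | h1
  · refine ⟨fun _ => 0, fun y => ⟨E.zero_mem, by simp⟩, ?_, ?_, ?_⟩
    · rw [Set.range_const]; exact Set.finite_singleton 0
    · rw [Set.range_const]
      simp only [Nat.card_unique, Nat.cast_one]
      exact le_max_left _ _
    · intro y _ hy; rw [sub_zero]; exact hy.trans h1
  · obtain ⟨s, hne, hnorm, hcard, hcov⟩ := exists_maximal_net (E := ↥E) hε h1.le
    set a₀ : ↥E := hne.choose with ha₀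
    have ha₀s : a₀ ∈ s := hne.choose_spec
    set r : H → H := fun y =>
      if h : ∃ a : ↥E, a ∈ s ∧ ‖y - ↑a‖ ≤ ε then ↑h.choose else ↑a₀ with hr
    have hrval : ∀ y, ∃ a : ↥E, a ∈ s ∧ r y = ↑a := by
      intro y
      by_cases h : ∃ a : ↥E, a ∈ s ∧ ‖y - ↑a‖ ≤ ε
      · exact ⟨h.choose, h.choose_spec.1, dif_pos h⟩
      · exact ⟨a₀, ha₀s, dif_neg h⟩
    have hrange : Set.range r ⊆ (fun a : ↥E => (a : H)) '' ↑s := by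
      rintro - ⟨y, rfl⟩
      obtain ⟨a, has, hay⟩ := hrval y
      exact ⟨a, has, hay.symm⟩
    have hfin : (Set.range r).Finite :=
      Set.Finite.subset (s.finite_toSet.image _) hrange
    refine ⟨r, ?_, hfin, ?_, ?_⟩
    · intro y
      obtain ⟨a, has, hay⟩ := hrval y
      rw [hay]
      exact ⟨a.2, by rw [show ‖(a:H)‖ = ‖a‖ from rfl]; exact hnorm a has⟩
    · have h1' : (Set.range r).ncard ≤ ((fun a : ↥E => (a : H)) '' ↑s).ncard :=
        Set.ncard_le_ncard hrange (s.finite_toSet.image _)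
      have h2' : ((fun a : ↥E => (a : H)) '' ↑s).ncard = s.card := by
        rw [Set.ncard_image_of_injective _ Subtype.val_injective, Set.ncard_coe_finset]
      rw [Nat.card_coe_set_eq]
      calc ((Set.range r).ncard : ℝ) ≤ (s.card : ℝ) := by exact_mod_cast h2' ▸ h1'
        _ ≤ (3 / ε) ^ Module.finrank ℝ ↥E := hcard
        _ ≤ max 1 ((3 / ε) ^ Module.finrank ℝ ↥E) := le_max_right _ _
    · intro y hyE hy
      have hx : ‖(⟨y, hyE⟩ : ↥E)‖ ≤ 1 := hy
      obtain ⟨a, has, hdist⟩ := hcov ⟨y, hyE⟩ hx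
      rw [Subtype.dist_eq, dist_eq_norm] at hdist
      have h : ∃ a : ↥E, a ∈ s ∧ ‖y - ↑a‖ ≤ ε := ⟨a, has, hdist⟩
      have hry : r y = ↑h.choose := dif_pos h
      rw [hry]
      exact h.choose_spec.2

lemma ncard_biUnion_le' {α β : Type*} {s : Set α} (hs : s.Finite) (t : α → Set β) {M : ℕ}
    (ht : ∀ a, (t a).Finite) (hM : ∀ a, (t a).ncard ≤ M) :
    (⋃ a ∈ s, t a).ncard ≤ s.ncard * M := by
  refine Set.Finite.induction_on s hs (by simp) @fun a s' ha hs' ih => ?_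
  rw [Set.biUnion_insert]
  calc (t a ∪ ⋃ x ∈ s', t x).ncard ≤ (t a).ncard + (⋃ x ∈ s', t x).ncard :=
        Set.ncard_union_le _ _
    _ ≤ M + s'.ncard * M := add_le_add (hM a) ih
    _ = (s'.ncard + 1) * M := by ring
    _ = (insert a s').ncard * M := by rw [Set.ncard_insert_of_notMem ha hs']

lemma two_rpow_half_nat (m : ℕ) : (2:ℝ) ^ ((m:ℝ)/2) = Real.sqrt 2 ^ m := by
  rw [Real.sqrt_eq_rpow, ← Real.rpow_natCast ((2:ℝ) ^ ((1:ℝ)/2)) m,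
      ← Real.rpow_mul (by norm_num : (0:ℝ) ≤ 2)]
  congr 1
  ring

lemma pow_clog_le_two_mul {K : ℕ} (hK : 1 ≤ K) : 2 ^ Nat.clog 2 K ≤ 2 * K := by
  rcases eq_or_lt_of_le hK with h1 | h1
  · rw [← h1]; simp
  · have hL : 0 < Nat.clog 2 K := Nat.clog_pos one_lt_two h1
    have h2 := Nat.pow_pred_clog_lt_self one_lt_two h1
    calc 2 ^ Nat.clog 2 K = 2 * 2 ^ (Nat.clog 2 K - 1) := by
          rw [← pow_succ']
          congr 1
          omega
      _ ≤ 2 * K := by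
          have h2' : 2 ^ (Nat.clog 2 K - 1) < K := by
            simpa [Nat.pred_eq_sub_one] using h2
          omega

/-- The key entropy-sum estimate: `Σ_m 2^(m/2) · 3 · 2^(-2^m/K) ≲ √K`. -/
lemma sum_eps_bound {K : ℕ} (hK : 1 ≤ K) :
    (∑' m : ℕ, (2:ℝ≥0∞) ^ ((m:ℝ)/2) * ENNReal.ofReal (3 * (2:ℝ) ^ (-(2^m : ℝ)/(K:ℝ))))
      ≤ ENNReal.ofReal (48 * Real.sqrt K) := by
  classical
  set c : ℝ := Real.sqrt 2 with hc
  have hc0 : 0 < c := Real.sqrt_pos.mpr two_pos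
  have hc75 : (7/5 : ℝ) ≤ c := by
    rw [hc, show (7/5:ℝ) = Real.sqrt ((7/5)^2) from (Real.sqrt_sq (by norm_num)).symm]
    exact Real.sqrt_le_sqrt (by norm_num)
  have hc32 : c ≤ (3/2 : ℝ) := by
    rw [hc, show (3/2:ℝ) = Real.sqrt ((3/2)^2) from (Real.sqrt_sq (by norm_num)).symm]
    exact Real.sqrt_le_sqrt (by norm_num)
  have hcsq : c ^ 2 = 2 := Real.sq_sqrt (by norm_num)
  have hK0 : (0:ℝ) < (K:ℝ) := by exact_mod_cast hK
  have hsK : (0:ℝ) ≤ Real.sqrt K := Real.sqrt_nonneg _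
  set L : ℕ := Nat.clog 2 K with hL
  set u : ℕ → ℝ := fun m => (2:ℝ) ^ ((m:ℝ)/2) * (3 * (2:ℝ) ^ (-(2^m : ℝ)/(K:ℝ))) with hu
  have hu0 : ∀ m, 0 ≤ u m := by
    intro m
    apply mul_nonneg (Real.rpow_nonneg (by norm_num) _)
    positivity
  have hterm : ∀ m : ℕ, (2:ℝ≥0∞) ^ ((m:ℝ)/2) * ENNReal.ofReal (3 * (2:ℝ) ^ (-(2^m : ℝ)/(K:ℝ)))
      = ENNReal.ofReal (u m) := by
    intro m
    rw [show (2:ℝ≥0∞) = ENNReal.ofReal (2:ℝ) from (ENNReal.ofReal_ofNat 2).symm,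
        ENNReal.ofReal_rpow_of_pos two_pos,
        ← ENNReal.ofReal_mul (Real.rpow_nonneg (by norm_num) _)]
  have hcL : c ^ L ≤ c * Real.sqrt K := by
    have h2L : ((2:ℝ)) ^ L ≤ 2 * (K:ℝ) := by exact_mod_cast pow_clog_le_two_mul hK
    apply le_of_pow_le_pow_left₀ (n := 2) two_ne_zero (by positivity)
    calc (c ^ L) ^ 2 = (c ^ 2) ^ L := by ring
      _ = 2 ^ L := by rw [hcsq]
      _ ≤ 2 * (K:ℝ) := h2L
      _ = (c * Real.sqrt K) ^ 2 := by
          rw [mul_pow, hcsq, Real.sq_sqrt hK0.le]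
  have hKle : (K:ℝ) ≤ 2 ^ L := by exact_mod_cast Nat.le_pow_clog one_lt_two K
  -- Part 1
  have part1 : (∑ m ∈ Finset.range L, ENNReal.ofReal (u m))
      ≤ ENNReal.ofReal (12 * Real.sqrt K) := by
    rw [← ENNReal.ofReal_sum_of_nonneg (fun i _ => hu0 i)]
    apply ENNReal.ofReal_le_ofReal
    have hstep : ∀ m, u m ≤ 3 * c ^ m := by
      intro m
      rw [hu]
      simp only
      rw [two_rpow_half_nat]
      have hexp : -(2^m : ℝ)/(K:ℝ) ≤ 0 :=
        div_nonpos_of_nonpos_of_nonneg (neg_nonpos.mpr (by positivity)) hK0.le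
      have h1 : (2:ℝ) ^ (-(2^m : ℝ)/(K:ℝ)) ≤ 1 :=
        Real.rpow_le_one_of_one_le_of_nonpos one_le_two hexp
      have h2 : (0:ℝ) ≤ c ^ m := pow_nonneg hc0.le m
      nlinarith
    calc (∑ m ∈ Finset.range L, u m) ≤ ∑ m ∈ Finset.range L, 3 * c ^ m :=
          Finset.sum_le_sum (fun m _ => hstep m)
      _ = 3 * ∑ m ∈ Finset.range L, c ^ m := by rw [Finset.mul_sum]
      _ = 3 * ((c ^ L - 1) / (c - 1)) := by rw [geom_sum_eq (by nlinarith : c ≠ 1)]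
      _ ≤ 3 * ((c * Real.sqrt K) / (2/5)) := by
          apply mul_le_mul_of_nonneg_left _ (by norm_num)
          apply div_le_div₀ (by positivity) (by nlinarith) (by norm_num) (by nlinarith)
      _ ≤ 12 * Real.sqrt K := by nlinarith
  -- Part 2
  have key : ∀ i : ℕ, u (i + L) ≤ (3 * c * Real.sqrt K) * (c⁻¹) ^ i := by
    intro i
    have e1 : (2:ℝ) ^ (-(2^(i+L) : ℝ)/(K:ℝ)) ≤ (2:ℝ) ^ (-((2:ℝ)^i)) := by
      apply Real.rpow_le_rpow_of_exponent_le one_le_two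
      rw [div_le_iff₀ hK0]
      have : (K:ℝ) * (2:ℝ)^i ≤ (2:ℝ)^(i+L) := by
        rw [pow_add]
        calc (K:ℝ) * (2:ℝ)^i ≤ (2:ℝ)^L * (2:ℝ)^i :=
              mul_le_mul_of_nonneg_right hKle (by positivity)
          _ = (2:ℝ)^i * (2:ℝ)^L := by ring
      nlinarith [this]
    have e2 : c ^ i * (2:ℝ) ^ (-((2:ℝ)^i)) ≤ (c⁻¹) ^ i := by
      rw [← two_rpow_half_nat i, ← Real.rpow_add two_pos]
      have hpow : ((i:ℝ)/2 + -((2:ℝ)^i)) ≤ -(i:ℝ)/2 := by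
        have h2i : (i:ℝ) ≤ (2:ℝ)^i := by
          exact_mod_cast (Nat.lt_two_pow_self (n := i)).le
        linarith
      calc (2:ℝ) ^ ((i:ℝ)/2 + -((2:ℝ)^i)) ≤ (2:ℝ) ^ (-(i:ℝ)/2) :=
            Real.rpow_le_rpow_of_exponent_le one_le_two hpow
        _ = ((2:ℝ) ^ ((i:ℝ)/2))⁻¹ := by
            rw [neg_div, Real.rpow_neg (by norm_num)]
        _ = (c ^ i)⁻¹ := by rw [two_rpow_half_nat]
        _ = (c⁻¹) ^ i := by rw [inv_pow]
    have hrw : u (i + L) = 3 * c ^ L * (c ^ i * (2:ℝ) ^ (-(2^(i+L) : ℝ)/(K:ℝ))) := by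
      rw [hu]
      simp only
      rw [two_rpow_half_nat, pow_add]
      ring
    calc u (i + L) = 3 * c ^ L * (c ^ i * (2:ℝ) ^ (-(2^(i+L) : ℝ)/(K:ℝ))) := hrw
      _ ≤ 3 * c ^ L * (c ^ i * (2:ℝ) ^ (-((2:ℝ)^i))) := by
          apply mul_le_mul_of_nonneg_left _ (by positivity)
          exact mul_le_mul_of_nonneg_left e1 (by positivity)
      _ ≤ 3 * c ^ L * (c⁻¹) ^ i := mul_le_mul_of_nonneg_left e2 (by positivity)
      _ ≤ 3 * (c * Real.sqrt K) * (c⁻¹) ^ i := by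
          apply mul_le_mul_of_nonneg_right _ (by positivity)
          nlinarith
      _ = (3 * c * Real.sqrt K) * (c⁻¹) ^ i := by ring
  have hinv4 : (1 - ENNReal.ofReal c⁻¹)⁻¹ ≤ 4 := by
    have hc34 : c⁻¹ ≤ (3/4 : ℝ) := by
      rw [inv_le_comm₀ hc0 (by norm_num)]
      linarith
    have h34 : ENNReal.ofReal (3/4 : ℝ) = 3/4 := by
      rw [ENNReal.ofReal_div_of_pos (by norm_num)]
      norm_num
    have hr34 : ENNReal.ofReal c⁻¹ ≤ 3/4 := h34 ▸ ENNReal.ofReal_le_ofReal hc34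
    have h44 : (4:ℝ≥0∞)/4 = 1 := ENNReal.div_self (by norm_num) (by norm_num)
    have hsplit : (1:ℝ≥0∞) = 1/4 + 3/4 := by
      rw [ENNReal.div_add_div_same, show (1:ℝ≥0∞)+3 = 4 by norm_num, h44]
    have hquarter : (1:ℝ≥0∞) - 3/4 = 4⁻¹ := by
      rw [hsplit, ENNReal.add_sub_cancel_right (ENNReal.div_lt_top (by norm_num)
        (by norm_num)).ne, one_div]
    have hsub : (4:ℝ≥0∞)⁻¹ ≤ 1 - ENNReal.ofReal c⁻¹ := by
      rw [← hquarter]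
      exact tsub_le_tsub_left hr34 1
    calc (1 - ENNReal.ofReal c⁻¹)⁻¹ ≤ ((4:ℝ≥0∞)⁻¹)⁻¹ := ENNReal.inv_le_inv.mpr hsub
      _ = 4 := inv_inv 4
  have part2 : (∑' i : ℕ, ENNReal.ofReal (u (i + L)))
      ≤ ENNReal.ofReal (18 * Real.sqrt K) := by
    calc (∑' i : ℕ, ENNReal.ofReal (u (i + L)))
        ≤ ∑' i : ℕ, ENNReal.ofReal ((3 * c * Real.sqrt K) * (c⁻¹) ^ i) :=
          ENNReal.tsum_le_tsum (fun i => ENNReal.ofReal_le_ofReal (key i))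
      _ = ∑' i : ℕ, ENNReal.ofReal (3 * c * Real.sqrt K) * (ENNReal.ofReal c⁻¹) ^ i := by
          apply tsum_congr
          intro i
          rw [ENNReal.ofReal_mul (by positivity), ENNReal.ofReal_pow (by positivity)]
      _ = ENNReal.ofReal (3 * c * Real.sqrt K) * (1 - ENNReal.ofReal c⁻¹)⁻¹ := by
          rw [ENNReal.tsum_mul_left, ENNReal.tsum_geometric]
      _ ≤ ENNReal.ofReal (3 * c * Real.sqrt K) * 4 := mul_le_mul_right hinv4 _
      _ = ENNReal.ofReal (3 * c * Real.sqrt K) * ENNReal.ofReal 4 := by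
          rw [ENNReal.ofReal_ofNat]
      _ = ENNReal.ofReal (3 * c * Real.sqrt K * 4) := by
          rw [← ENNReal.ofReal_mul (by positivity)]
      _ ≤ ENNReal.ofReal (18 * Real.sqrt K) := ENNReal.ofReal_le_ofReal (by nlinarith)
  calc (∑' m : ℕ, (2:ℝ≥0∞) ^ ((m:ℝ)/2) * ENNReal.ofReal (3 * (2:ℝ) ^ (-(2^m : ℝ)/(K:ℝ))))
      = ∑' m : ℕ, ENNReal.ofReal (u m) := tsum_congr hterm
    _ = (∑ i ∈ Finset.range L, ENNReal.ofReal (u i)) + ∑' i : ℕ, ENNReal.ofReal (u (i + L)) :=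
        (ENNReal.summable.sum_add_tsum_nat_add').symm
    _ ≤ ENNReal.ofReal (12 * Real.sqrt K) + ENNReal.ofReal (18 * Real.sqrt K) :=
        add_le_add part1 part2
    _ = ENNReal.ofReal (30 * Real.sqrt K) := by
        rw [← ENNReal.ofReal_add (by positivity) (by positivity)]
        ring_nf
    _ ≤ ENNReal.ofReal (48 * Real.sqrt K) := ENNReal.ofReal_le_ofReal (by nlinarith)

lemma gamma2_le {T : Type*} {d : T → T → ℝ≥0∞} (π : ℕ → T → T)
    (hadm : (Set.range (π 0)).Subsingleton ∧
      ∀ n, (Set.range (π n)).Finite ∧ Nat.card (Set.range (π n)) ≤ 2 ^ 2 ^ n) :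
    gamma2 d ≤ ⨆ t, ∑' n : ℕ, (2 : ℝ≥0∞) ^ ((n : ℝ) / 2) * d t (π n t) :=
  iInf₂_le π hadm

lemma exists_pi_of_gamma2_lt {T : Type*} {d : T → T → ℝ≥0∞} {b : ℝ≥0∞}
    (h : gamma2 d < b) :
    ∃ π : ℕ → T → T, ((Set.range (π 0)).Subsingleton ∧
      ∀ n, (Set.range (π n)).Finite ∧ Nat.card (Set.range (π n)) ≤ 2 ^ 2 ^ n) ∧
      (⨆ t, ∑' n : ℕ, (2 : ℝ≥0∞) ^ ((n : ℝ) / 2) * d t (π n t)) < b := by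
  obtain ⟨π, hπ⟩ := iInf_lt_iff.mp h
  by_cases hadm : (Set.range (π 0)).Subsingleton ∧
      ∀ n, (Set.range (π n)).Finite ∧ Nat.card (Set.range (π n)) ≤ 2 ^ 2 ^ n
  · refine ⟨π, hadm, ?_⟩
    rwa [iInf_pos hadm] at hπ
  · rw [iInf_neg hadm] at hπ
    exact absurd hπ not_top_lt

section ProjLemmas

variable {H : Type*} [NormedAddCommGroup H] [InnerProductSpace ℝ H] [CompleteSpace H]
  (S : Submodule ℝ H) [FiniteDimensional ℝ S]

lemma projCLM_apply_mem (x : H) : projCLM S x ∈ S := (Submodule.orthogonalProjection S x).2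

lemma norm_projCLM_apply_le (x : H) : ‖projCLM S x‖ ≤ ‖x‖ := by
  have h1 : ‖Submodule.orthogonalProjection S x‖ ≤ ‖x‖ := by
    calc ‖Submodule.orthogonalProjection S x‖ ≤ ‖Submodule.orthogonalProjection S‖ * ‖x‖ :=
          (Submodule.orthogonalProjection S).le_opNorm x
      _ ≤ 1 * ‖x‖ := mul_le_mul_of_nonneg_right (Submodule.orthogonalProjection_norm_le S) (norm_nonneg x)
      _ = ‖x‖ := one_mul _
  exact h1

lemma projCLM_apply_of_mem {x : H} (h : x ∈ S) : projCLM S x = x :=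
  Submodule.starProjection_eq_self_iff.mpr h

lemma projCLM_bot (hS : Module.finrank ℝ S = 0) (x : H) : projCLM S x = 0 := by
  have hbot : S = ⊥ := Submodule.finrank_eq_zero.mp hS
  have h1 := projCLM_apply_mem S x
  have h2 : projCLM S x ∈ (⊥ : Submodule ℝ H) := hbot ▸ h1
  simpa using h2

end ProjLemmas

/-- **`γ₂`-estimate for an infinite union of subspaces** (Lemma 6.1). There is an absolute
constant `C > 0` such that for any family `(S θ)_{θ ∈ Θ}` of finite-dimensional subspaces of
a real Hilbert space `H` with `dim S θ ≤ K`, the parametrization `ξ(θ, x) = P_θ x` of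
`(∪_θ S θ) ∩ B_H` by `Θ × B_H` satisfies
`γ₂(Θ × B_H, d_ξ) ≤ C (√K + γ₂(Θ, d_Fin))`, where `d_Fin(θ, θ') = ‖P_θ - P_θ'‖`. -/
theorem gamma2_union_subspaces :
    ∃ C : ℝ, 0 < C ∧
      ∀ (H : Type) [NormedAddCommGroup H] [InnerProductSpace ℝ H] [CompleteSpace H]
        (Θ : Type) (S : Θ → Submodule ℝ H) [∀ θ, FiniteDimensional ℝ (S θ)] (K : ℕ),
        (∀ θ, Module.finrank ℝ (S θ) ≤ K) →
        gamma2 (fun p q : Θ × (Metric.closedBall (0 : H) 1) =>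
            edist (projCLM (S p.1) (p.2 : H)) (projCLM (S q.1) (q.2 : H))) ≤
          ENNReal.ofReal C *
            (ENNReal.ofReal (Real.sqrt K) +
              gamma2 fun θ θ' : Θ => edist (projCLM (S θ)) (projCLM (S θ'))) := by
  classical
  refine ⟨100, by norm_num, ?_⟩
  intro H _ _ _ Θ S _ K hK
  rcases isEmpty_or_nonempty Θ with hΘ | hΘ
  · -- `Θ` is empty : the left-hand side is a supremum over an empty type.
    haveI : IsEmpty (Θ × (Metric.closedBall (0 : H) 1)) := inferInstance
    refine le_trans (gamma2_le (fun _ t => t) ⟨?_, fun n => ⟨?_, ?_⟩⟩) ?_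
    · rw [Set.range_eq_empty]; exact Set.subsingleton_empty
    · rw [Set.range_eq_empty]; exact Set.finite_empty
    · rw [Set.range_eq_empty]; simp
    · rw [iSup_of_empty]; exact bot_le
  obtain ⟨θ₀⟩ := hΘ
  have h0B : (0:H) ∈ Metric.closedBall (0:H) 1 := Metric.mem_closedBall_self zero_le_one
  set t₀ : Θ × (Metric.closedBall (0:H) 1) := (θ₀, ⟨0, h0B⟩) with ht₀
  haveI : Nonempty (Θ × (Metric.closedBall (0:H) 1)) := ⟨t₀⟩
  rcases Nat.eq_zero_or_pos K with hK0 | hK1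
  · -- `K = 0` : all the subspaces are trivial and the left-hand side vanishes.
    subst hK0
    have hproj0 : ∀ (θ : Θ) (x : H), projCLM (S θ) x = 0 := fun θ x =>
      projCLM_bot _ (Nat.le_zero.mp (hK θ)) x
    refine le_trans (gamma2_le (fun _ _ => t₀) ⟨?_, fun n => ⟨?_, ?_⟩⟩) ?_
    · rw [Set.range_const]; exact Set.subsingleton_singleton
    · rw [Set.range_const]; exact Set.finite_singleton t₀
    · rw [Set.range_const, Nat.card_coe_set_eq, Set.ncard_singleton]
      exact Nat.one_le_two_pow
    · refine le_trans (iSup_le fun t => le_of_eq ?_) zero_le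
      simp only [hproj0, edist_self, mul_zero, tsum_zero]
  -- main case `1 ≤ K`
  set gΘ := gamma2 (fun θ θ' : Θ => edist (projCLM (S θ)) (projCLM (S θ'))) with hgΘ
  by_cases hgtop : gΘ = ⊤
  · rw [hgtop, add_top, ENNReal.mul_top (ENNReal.ofReal_pos.mpr (by norm_num)).ne']
    exact le_top
  apply ENNReal.le_of_forall_pos_le_add
  intro ε hε _
  set δ : ℝ≥0∞ := (ε : ℝ≥0∞) / 2 with hδ
  have hδ0 : δ ≠ 0 :=
    (ENNReal.div_pos (by exact_mod_cast hε.ne' : (ε:ℝ≥0∞) ≠ 0) (by norm_num)).ne'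
  have hlt2 : gΘ < gΘ + δ := ENNReal.lt_add_right hgtop hδ0
  obtain ⟨π, hπadm, hπval⟩ := exists_pi_of_gamma2_lt hlt2
  have hKR : (0:ℝ) < (K:ℝ) := by exact_mod_cast hK1
  set eps : ℕ → ℝ := fun m => 3 * (2:ℝ) ^ (-(2^m : ℝ)/(K:ℝ)) with heps
  have heps_pos : ∀ m, 0 < eps m := fun m => by
    have := Real.rpow_pos_of_pos two_pos (-(2^m : ℝ)/(K:ℝ))
    rw [heps]; positivity
  choose r hrmem hrfin hrcard hrcov using fun (θ : Θ) (m : ℕ) => exists_net (S θ) (heps_pos m)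
  -- cardinality bound for the nets
  have hrcard' : ∀ θ m, Nat.card (Set.range (r θ m)) ≤ 2 ^ 2 ^ m := by
    intro θ m
    have hy0 : (0:ℝ) < (2:ℝ) ^ ((2^m : ℝ)/(K:ℝ)) := Real.rpow_pos_of_pos two_pos _
    have h3e : 3 / eps m = (2:ℝ) ^ ((2^m : ℝ)/(K:ℝ)) := by
      rw [heps]
      simp only
      rw [neg_div, Real.rpow_neg (by norm_num : (0:ℝ) ≤ 2)]
      field_simp
    have hge1 : (1:ℝ) ≤ (2:ℝ) ^ ((2^m : ℝ)/(K:ℝ)) :=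
      Real.one_le_rpow one_le_two (by positivity)
    have hKpow : ((2:ℝ) ^ ((2^m : ℝ)/(K:ℝ))) ^ K = ((2^(2^m) : ℕ) : ℝ) := by
      rw [← Real.rpow_natCast ((2:ℝ) ^ ((2^m : ℝ)/(K:ℝ))) K,
          ← Real.rpow_mul (by norm_num : (0:ℝ) ≤ 2),
          div_mul_cancel₀ _ (by exact_mod_cast hK1.ne' : (K:ℝ) ≠ 0),
          show ((2^m : ℝ)) = ((2^m : ℕ) : ℝ) by push_cast; ring, Real.rpow_natCast]
      push_cast
      ring
    have hb := hrcard θ m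
    rw [h3e] at hb
    have hmax : max 1 (((2:ℝ) ^ ((2^m : ℝ)/(K:ℝ))) ^ Module.finrank ℝ ↥(S θ))
        ≤ ((2^(2^m):ℕ):ℝ) := by
      apply max_le
      · rw [← hKpow]
        exact hge1.trans (le_self_pow₀ hge1 hK1.ne')
      · calc ((2:ℝ) ^ ((2^m : ℝ)/(K:ℝ))) ^ Module.finrank ℝ ↥(S θ)
            ≤ ((2:ℝ) ^ ((2^m : ℝ)/(K:ℝ))) ^ K := pow_le_pow_right₀ hge1 (hK θ)
          _ = ((2^(2^m):ℕ):ℝ) := hKpow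
    have hfinal : (Nat.card (Set.range (r θ m)) : ℝ) ≤ ((2^(2^m):ℕ):ℝ) := hb.trans hmax
    exact_mod_cast hfinal
  -- the admissible sequence on the product
  have hmemB : ∀ (θ' : Θ) (m : ℕ) (y : H), r θ' m y ∈ Metric.closedBall (0:H) 1 := by
    intro θ' m y
    rw [Metric.mem_closedBall, dist_zero_right]
    exact (hrmem θ' m y).2
  set σ : ℕ → (Θ × (Metric.closedBall (0:H) 1)) → (Θ × (Metric.closedBall (0:H) 1)) :=
    fun n => Nat.casesOn n (fun _ => t₀)
      (fun m t => (π m t.1,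
        ⟨r (π m t.1) m (projCLM (S (π m t.1)) (t.2 : H)), hmemB _ _ _⟩)) with hσ
  have hσ0 : σ 0 = fun _ => t₀ := rfl
  have hσs : ∀ (m : ℕ) t, σ (m+1) t =
      (π m t.1, ⟨r (π m t.1) m (projCLM (S (π m t.1)) (t.2 : H)), hmemB _ _ _⟩) :=
    fun _ _ => rfl
  have hadm : (Set.range (σ 0)).Subsingleton ∧
      ∀ n, (Set.range (σ n)).Finite ∧ Nat.card (Set.range (σ n)) ≤ 2 ^ 2 ^ n := by
    constructor
    · rw [hσ0, Set.range_const]; exact Set.subsingleton_singleton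
    · intro n
      cases n with
      | zero =>
          rw [hσ0, Set.range_const]
          exact ⟨Set.finite_singleton t₀, by
            rw [Nat.card_coe_set_eq, Set.ncard_singleton]; exact Nat.one_le_two_pow⟩
      | succ m =>
          set U := ⋃ θ' ∈ Set.range (π m),
            Prod.mk θ' '' ((Subtype.val : (Metric.closedBall (0:H) 1 : Set H) → H) ⁻¹' (Set.range (r θ' m))) with hU
          have hfin_g : ∀ θ' : Θ,
              (Prod.mk θ' '' ((Subtype.val : (Metric.closedBall (0:H) 1 : Set H) → H) ⁻¹' (Set.range (r θ' m)))).Finite :=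
            fun θ' => ((hrfin θ' m).preimage (Subtype.val_injective.injOn)).image _
          have hUfin : U.Finite := Set.Finite.biUnion (hπadm.2 m).1 (fun θ' _ => hfin_g θ')
          have hsub : Set.range (σ (m+1)) ⊆ U := by
            rintro - ⟨t, rfl⟩
            rw [hσs]
            apply Set.mem_biUnion (Set.mem_range_self t.1)
            exact ⟨⟨r (π m t.1) m (projCLM (S (π m t.1)) (t.2:H)), hmemB _ _ _⟩,
              ⟨_, rfl⟩, rfl⟩
          refine ⟨hUfin.subset hsub, ?_⟩
          have hg_card : ∀ θ' : Θ,
              (Prod.mk θ' '' ((Subtype.val : (Metric.closedBall (0:H) 1 : Set H) → H) ⁻¹' (Set.range (r θ' m)))).ncard ≤ 2 ^ 2 ^ m := by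
            intro θ'
            have hinj : Function.Injective
                (Prod.mk θ' : (Metric.closedBall (0:H) 1) → Θ × (Metric.closedBall (0:H) 1)) :=
              fun a b h => by simpa using congrArg Prod.snd h
            rw [Set.ncard_image_of_injective _ hinj]
            have h1 : ((Subtype.val : (Metric.closedBall (0:H) 1 : Set H) → H) ⁻¹' (Set.range (r θ' m))).ncard
                ≤ (Set.range (r θ' m)).ncard :=
              Set.ncard_le_ncard_of_injOn Subtype.val (fun a ha => ha)
                (Subtype.val_injective.injOn) (hrfin θ' m)
            refine h1.trans ?_
            rw [← Nat.card_coe_set_eq]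
            exact hrcard' θ' m
          have hcard_U : U.ncard ≤ 2 ^ 2 ^ m * 2 ^ 2 ^ m := by
            refine (ncard_biUnion_le' (hπadm.2 m).1 _ (fun θ' => hfin_g θ') hg_card).trans ?_
            apply Nat.mul_le_mul_right
            rw [← Nat.card_coe_set_eq]
            exact (hπadm.2 m).2
          calc Nat.card (Set.range (σ (m+1)))
              = (Set.range (σ (m+1))).ncard := Nat.card_coe_set_eq _
            _ ≤ U.ncard := Set.ncard_le_ncard hsub hUfin
            _ ≤ 2 ^ 2 ^ m * 2 ^ 2 ^ m := hcard_U
            _ = 2 ^ 2 ^ (m+1) := by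
                rw [← pow_add]
                congr 1
                rw [pow_succ]
                ring
  refine le_trans (gamma2_le σ hadm) ?_
  have hsqK1 : (1:ℝ) ≤ Real.sqrt K := by
    rw [show (1:ℝ) = Real.sqrt 1 from (Real.sqrt_one).symm]
    exact Real.sqrt_le_sqrt (by exact_mod_cast hK1)
  have hbound : ∀ t : Θ × (Metric.closedBall (0:H) 1),
      (∑' n : ℕ, (2:ℝ≥0∞) ^ ((n:ℝ)/2) *
        edist (projCLM (S t.1) (t.2:H)) (projCLM (S (σ n t).1) (((σ n t).2:H))))
      ≤ ENNReal.ofReal (97 * Real.sqrt K) + 2 * (gΘ + δ) := by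
    rintro ⟨θ, x⟩
    have hx1 : ‖(x:H)‖ ≤ 1 := by
      have := x.2
      rwa [Metric.mem_closedBall, dist_zero_right] at this
    set f : ℕ → ℝ≥0∞ := fun n => (2:ℝ≥0∞) ^ ((n:ℝ)/2) *
      edist (projCLM (S θ) (x:H)) (projCLM (S (σ n (θ,x)).1) (((σ n (θ,x)).2:H))) with hf
    have h0 : f 0 ≤ ENNReal.ofReal (Real.sqrt K) := by
      rw [hf]
      simp only [Nat.cast_zero, zero_div, ENNReal.rpow_zero, one_mul]
      have : ((σ 0 (θ,x)).2 : H) = (0:H) := rfl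
      rw [show (σ 0 (θ,x)) = t₀ from rfl]
      rw [show ((t₀.2 : H)) = (0:H) from rfl, map_zero, edist_dist, dist_zero_right]
      exact ENNReal.ofReal_le_ofReal ((norm_projCLM_apply_le _ _).trans (hx1.trans hsqK1))
    have hsucc : ∀ m : ℕ,
        edist (projCLM (S θ) (x:H)) (projCLM (S (σ (m+1) (θ,x)).1) (((σ (m+1) (θ,x)).2:H)))
        ≤ edist (projCLM (S θ)) (projCLM (S (π m θ))) + ENNReal.ofReal (eps m) := by
      intro m
      show edist (projCLM (S θ) (x:H))
          (projCLM (S (π m θ)) (r (π m θ) m (projCLM (S (π m θ)) (x:H)))) ≤ _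
      set θ' := π m θ with hθ'
      set y := projCLM (S θ') (x:H) with hy
      set a := r θ' m y with ha
      have hPa : projCLM (S θ') a = a := projCLM_apply_of_mem _ (hrmem θ' m y).1
      rw [hPa]
      calc edist (projCLM (S θ) (x:H)) a
          ≤ edist (projCLM (S θ) (x:H)) y + edist y a := edist_triangle _ _ _
        _ ≤ edist (projCLM (S θ)) (projCLM (S θ')) + ENNReal.ofReal (eps m) := by
            apply add_le_add
            · rw [edist_dist, edist_dist]
              apply ENNReal.ofReal_le_ofReal
              rw [dist_eq_norm, dist_eq_norm]
              calc ‖projCLM (S θ) (x:H) - y‖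
                  = ‖(projCLM (S θ) - projCLM (S θ')) (x:H)‖ := by
                    rw [hy, ContinuousLinearMap.sub_apply]
                _ ≤ ‖projCLM (S θ) - projCLM (S θ')‖ * ‖(x:H)‖ :=
                    ContinuousLinearMap.le_opNorm _ _
                _ ≤ ‖projCLM (S θ) - projCLM (S θ')‖ * 1 :=
                    mul_le_mul_of_nonneg_left hx1 (norm_nonneg _)
                _ = ‖projCLM (S θ) - projCLM (S θ')‖ := mul_one _
            · rw [edist_dist, dist_eq_norm]
              apply ENNReal.ofReal_le_ofReal
              exact hrcov θ' m y (projCLM_apply_mem _ _)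
                ((norm_projCLM_apply_le _ _).trans hx1)
    have hfsucc : ∀ i : ℕ, f (i+1) ≤ 2 * ((2:ℝ≥0∞)^((i:ℝ)/2) *
        (edist (projCLM (S θ)) (projCLM (S (π i θ))) + ENNReal.ofReal (eps i))) := by
      intro i
      rw [hf]
      simp only
      have hexp : (((i+1:ℕ)):ℝ)/2 = (i:ℝ)/2 + (1:ℝ)/2 := by push_cast; ring
      rw [hexp, ENNReal.rpow_add _ _ two_ne_zero ENNReal.ofNat_ne_top]
      have h12 : (2:ℝ≥0∞)^((1:ℝ)/2) ≤ 2 := by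
        calc (2:ℝ≥0∞)^((1:ℝ)/2) ≤ (2:ℝ≥0∞)^(1:ℝ) :=
              ENNReal.rpow_le_rpow_of_exponent_le (by norm_num) (by norm_num)
          _ = 2 := ENNReal.rpow_one 2
      calc (2:ℝ≥0∞)^((i:ℝ)/2) * (2:ℝ≥0∞)^((1:ℝ)/2) *
            edist (projCLM (S θ) (x:H)) (projCLM (S (σ (i+1) (θ,x)).1) (((σ (i+1) (θ,x)).2:H)))
          ≤ (2:ℝ≥0∞)^((i:ℝ)/2) * 2 *
            (edist (projCLM (S θ)) (projCLM (S (π i θ))) + ENNReal.ofReal (eps i)) :=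
            mul_le_mul' (mul_le_mul_right h12 _) (hsucc i)
        _ = 2 * ((2:ℝ≥0∞)^((i:ℝ)/2) *
            (edist (projCLM (S θ)) (projCLM (S (π i θ))) + ENNReal.ofReal (eps i))) := by
            ring
    have hsplit : ∑' n, f n = f 0 + ∑' i, f (i + 1) := by
      have := (ENNReal.summable.sum_add_tsum_nat_add' (f := f) (k := 1)).symm
      rwa [Finset.sum_range_one] at this
    calc (∑' n, f n) = f 0 + ∑' i, f (i + 1) := hsplit
      _ ≤ ENNReal.ofReal (Real.sqrt K) + ∑' i : ℕ, 2 * ((2:ℝ≥0∞)^((i:ℝ)/2) *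
            (edist (projCLM (S θ)) (projCLM (S (π i θ))) + ENNReal.ofReal (eps i))) :=
          add_le_add h0 (ENNReal.tsum_le_tsum hfsucc)
      _ = ENNReal.ofReal (Real.sqrt K) + 2 *
            ((∑' i : ℕ, (2:ℝ≥0∞)^((i:ℝ)/2) * edist (projCLM (S θ)) (projCLM (S (π i θ)))) +
             (∑' i : ℕ, (2:ℝ≥0∞)^((i:ℝ)/2) * ENNReal.ofReal (eps i))) := by
          rw [ENNReal.tsum_mul_left, ← ENNReal.tsum_add]
          congr 2
          apply tsum_congr
          intro i
          rw [mul_add]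
      _ ≤ ENNReal.ofReal (Real.sqrt K) + 2 * ((gΘ + δ) + ENNReal.ofReal (48 * Real.sqrt K)) := by
          apply add_le_add_right
          apply mul_le_mul_right
          apply add_le_add
          · exact le_trans (le_iSup (fun θ'' => ∑' i : ℕ, (2:ℝ≥0∞)^((i:ℝ)/2) *
              edist (projCLM (S θ'')) (projCLM (S (π i θ'')))) θ) hπval.le
          · rw [heps]
            exact sum_eps_bound hK1
      _ ≤ ENNReal.ofReal (97 * Real.sqrt K) + 2 * (gΘ + δ) := by
          have hof : ENNReal.ofReal (Real.sqrt K) + 2 * ENNReal.ofReal (48 * Real.sqrt K)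
              ≤ ENNReal.ofReal (97 * Real.sqrt K) := by
            rw [show (2:ℝ≥0∞) = ENNReal.ofReal 2 from (ENNReal.ofReal_ofNat 2).symm,
                ← ENNReal.ofReal_mul (by norm_num),
                ← ENNReal.ofReal_add (by positivity) (by positivity)]
            exact ENNReal.ofReal_le_ofReal (by nlinarith [Real.sqrt_nonneg (K:ℝ)])
          calc ENNReal.ofReal (Real.sqrt K) + 2 * ((gΘ + δ) + ENNReal.ofReal (48 * Real.sqrt K))
              = (ENNReal.ofReal (Real.sqrt K) + 2 * ENNReal.ofReal (48 * Real.sqrt K))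
                + 2 * (gΘ + δ) := by ring
            _ ≤ ENNReal.ofReal (97 * Real.sqrt K) + 2 * (gΘ + δ) := add_le_add_left hof _
  refine le_trans (iSup_le hbound) ?_
  have h2δ : 2 * δ = (ε : ℝ≥0∞) := ENNReal.mul_div_cancel' (by norm_num) (by norm_num)
  calc ENNReal.ofReal (97 * Real.sqrt K) + 2 * (gΘ + δ)
      = ENNReal.ofReal (97 * Real.sqrt K) + 2 * gΘ + (ε : ℝ≥0∞) := by
        rw [mul_add, h2δ, add_assoc]
    _ ≤ ENNReal.ofReal 100 * ENNReal.ofReal (Real.sqrt K) + ENNReal.ofReal 100 * gΘ +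
          (ε : ℝ≥0∞) := by
        apply add_le_add_left
        apply add_le_add
        · rw [← ENNReal.ofReal_mul (by norm_num)]
          exact ENNReal.ofReal_le_ofReal (by nlinarith [Real.sqrt_nonneg (K:ℝ)])
        · apply mul_le_mul_left
          rw [ENNReal.ofReal_ofNat]
          norm_num
    _ = ENNReal.ofReal 100 * (ENNReal.ofReal (Real.sqrt K) + gΘ) + (ε : ℝ≥0∞) := by
        rw [mul_add]
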